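/- Let m ≥ 3 be odd and let M ⊂ (F_2)^m be the zero-sum submodule for the S_m-action by permutation of coordinates. If g ∈ S_m is an (m−1)-cycle, then the coinvariants M/(g−1)M have F_2-dimension 1; if h ∈ S_m is an m-cycle, then M/(h−1)M = 0. -/

import Mathlib

/-- The linear endomorphism `g - 1` of `(F₂)^m`, where `g ∈ Sₘ` acts by
`(g • v) i = v (g⁻¹ i)`. -/
def permSubOne (m : ℕ) (g : Equiv.Perm (Fin m)) :
    (Fin m → ZMod 2) →ₗ[ZMod 2] (Fin m → ZMod 2) :=
  LinearMap.funLeft (ZMod 2) (ZMod 2) ⇑g⁻¹ - LinearMap.id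

/-- If `v` is invariant under precomposition with `g⁻¹`, then it is invariant under
all powers of `g`. -/
lemma constPow {m : ℕ} (g : Equiv.Perm (Fin m)) (v : Fin m → ZMod 2)
    (hv : ∀ i, v (g⁻¹ i) = v i) : ∀ (k : ℕ) (i), v ((g ^ k) i) = v i := by
  have hv' : ∀ i, v (g i) = v i := fun i => by
    have := hv (g i); simpa using this.symm
  intro k
  induction k with
  | zero => intro i; simp
  | succ n ih =>
      intro i
      rw [pow_succ, Equiv.Perm.mul_apply, ih (g i), hv' i]

lemma permSubOne_apply {m : ℕ} (g : Equiv.Perm (Fin m)) (w : Fin m → ZMod 2) (i : Fin m) :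
    permSubOne m g w i = w (g⁻¹ i) - w i := rfl

/-- For odd `m ≥ 3` and the zero-sum module `M ⊂ (F₂)^m`:
if `g` is an `(m-1)`-cycle then the coinvariants `M/(g-1)M` have `F₂`-dimension 1
(i.e. `(g-1)M` has index 2 in `M`), and if `h` is an `m`-cycle then `M/(h-1)M = 0`
(i.e. `(h-1)M = M`). -/
private lemma zmod2_ne_zero : ∀ x : ZMod 2, x ≠ 0 → x = 1 := by decide

private lemma zmod2_add_self : ∀ x : ZMod 2, x + x = 0 := by decide

private lemma zmod2_two : (2 : ZMod 2) = 0 := by decide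

theorem stmt5 (m : ℕ) (hm : 3 ≤ m) (hodd : Odd m)
    (M : Submodule (ZMod 2) (Fin m → ZMod 2))
    (hM : ∀ v : Fin m → ZMod 2, v ∈ M ↔ ∑ i, v i = 0)
    (g h : Equiv.Perm (Fin m))
    (hg : g.IsCycle) (hgcard : g.support.card = m - 1)
    (hh : h.IsCycle) (hhcard : h.support.card = m) :
    ((∃ v ∈ M, v ∉ Submodule.map (permSubOne m g) M) ∧
     (∀ v ∈ M, ∀ w ∈ M,
        v ∉ Submodule.map (permSubOne m g) M →
        w ∉ Submodule.map (permSubOne m g) M →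
        v - w ∈ Submodule.map (permSubOne m g) M)) ∧
    Submodule.map (permSubOne m h) M = M := by
  haveI : Fact (Nat.Prime 2) := ⟨Nat.prime_two⟩
  have hz1 := zmod2_ne_zero
  have hz2 := zmod2_add_self
  have hmcast : (m : ZMod 2) = 1 := by
    obtain ⟨k, hk⟩ := hodd
    subst hk
    push_cast
    rw [zmod2_two, zero_mul, zero_add]
  -- (g-1) always maps into the zero-sum module
  have hmapsub : ∀ (σ : Equiv.Perm (Fin m)) (w : Fin m → ZMod 2), permSubOne m σ w ∈ M := by
    intro σ w
    rw [hM]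
    have : ∑ i, permSubOne m σ w i = ∑ i, (w (σ⁻¹ i) - w i) := by
      refine Finset.sum_congr rfl fun i _ => permSubOne_apply σ w i
    rw [this, Finset.sum_sub_distrib, Equiv.sum_comp σ⁻¹ w, sub_self]
  ----------------------------------------------------------------
  -- Part 2 : the m-cycle h
  ----------------------------------------------------------------
  have hhsupp : ∀ i, h i ≠ i := by
    have hu : h.support = Finset.univ := Finset.eq_univ_of_card _ (by simpa using hhcard)
    intro i
    have : i ∈ h.support := by rw [hu]; exact Finset.mem_univ i
    exact Equiv.Perm.mem_support.mp this
  have hmaph : Submodule.map (permSubOne m h) M = M := by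
    set L : M →ₗ[ZMod 2] M :=
      (permSubOne m h).restrict (fun x _ => hmapsub h x) with hL
    have hLinj : Function.Injective L := by
      apply (injective_iff_map_eq_zero L).mpr
      intro x hx0
      have hv : ∀ i, (x : Fin m → ZMod 2) (h⁻¹ i) = (x : Fin m → ZMod 2) i := by
        intro i
        have h1 : (L x : Fin m → ZMod 2) i = 0 := by rw [hx0]; rfl
        have h2 : permSubOne m h (x : Fin m → ZMod 2) i = 0 := h1
        rw [permSubOne_apply] at h2
        exact sub_eq_zero.mp h2
      have hconst : ∀ i j, (x : Fin m → ZMod 2) i = (x : Fin m → ZMod 2) j := by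
        intro i j
        obtain ⟨k, hk⟩ := hh.exists_pow_eq (hhsupp i) (hhsupp j)
        rw [← hk, constPow h _ hv k i]
      have hxM : (x : Fin m → ZMod 2) ∈ M := x.2
      rw [hM] at hxM
      have i0 : Fin m := ⟨0, by omega⟩
      have hsum : ∑ i, (x : Fin m → ZMod 2) i = (m : ZMod 2) * (x : Fin m → ZMod 2) i0 := by
        rw [Finset.sum_congr rfl (fun i _ => hconst i i0), Finset.sum_const,
          Finset.card_univ, Fintype.card_fin, nsmul_eq_mul]
      have hx0' : (x : Fin m → ZMod 2) i0 = 0 := by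
        rw [hsum, hmcast, one_mul] at hxM; exact hxM
      apply Subtype.ext
      funext i
      rw [hconst i i0, hx0']
      rfl
    have hLsurj := LinearMap.injective_iff_surjective.mp hLinj
    apply le_antisymm
    · rintro v ⟨w, _, rfl⟩
      exact hmapsub h w
    · intro v hv
      obtain ⟨x, hx⟩ := hLsurj ⟨v, hv⟩
      exact ⟨x, x.2, congrArg Subtype.val hx⟩
  ----------------------------------------------------------------
  -- Part 1 : the (m-1)-cycle g
  ----------------------------------------------------------------
  obtain ⟨a, hacompl⟩ : ∃ a, g.supportᶜ = {a} := by
    apply Finset.card_eq_one.mp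
    rw [Finset.card_compl, hgcard, Fintype.card_fin]
    omega
  have hamem : ∀ i, i ∉ g.support ↔ i = a := by
    intro i
    rw [← Finset.mem_singleton, ← hacompl, Finset.mem_compl]
  have hga : g a = a := by
    have : a ∉ g.support := (hamem a).mpr rfl
    exact Equiv.Perm.notMem_support.mp this
  have hgainv : g⁻¹ a = a := by
    conv_lhs => rw [← hga]
    simp
  have hsupp : ∀ i, i ≠ a → g i ≠ i := by
    intro i hi
    apply Equiv.Perm.mem_support.mp
    by_contra hns
    exact hi ((hamem i).mp hns)
  obtain ⟨b, hb⟩ : ∃ b, b ∈ g.support := by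
    apply Finset.card_pos.mp
    rw [hgcard]; omega
  have hba : b ≠ a := fun e => ((hamem b).mpr e) hb
  have hgb : g b ≠ b := Equiv.Perm.mem_support.mp hb
  set ones : Fin m → ZMod 2 := fun _ => 1 with hones
  set ea : Fin m → ZMod 2 := fun i => if i = a then 1 else 0 with hea
  set eb : Fin m → ZMod 2 := fun i => if i = b then 1 else 0 with heb
  have hsum_ea : ∑ i, ea i = 1 := by
    rw [hea, Finset.sum_ite_eq' Finset.univ a (fun _ => (1 : ZMod 2))]
    simp
  have hsum_eb : ∑ i, eb i = 1 := by
    rw [heb, Finset.sum_ite_eq' Finset.univ b (fun _ => (1 : ZMod 2))]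
    simp
  have hTea : permSubOne m g ea = 0 := by
    funext i
    rw [permSubOne_apply]
    have hiff : g⁻¹ i = a ↔ i = a := by
      constructor
      · intro e
        have := congrArg g e
        rwa [← Equiv.Perm.mul_apply, mul_inv_cancel, Equiv.Perm.one_apply, hga] at this
      · intro e; rw [e, hgainv]
    show (if g⁻¹ i = a then (1:ZMod 2) else 0) - (if i = a then 1 else 0) = 0
    rw [if_congr hiff rfl rfl, sub_self]
  have hTones : permSubOne m g ones = 0 := by
    funext i
    rw [permSubOne_apply]
    show (1 : ZMod 2) - 1 = 0
    exact sub_self 1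
  -- the linear map φ : v ↦ (∑ v, v a)
  set sumL : (Fin m → ZMod 2) →ₗ[ZMod 2] ZMod 2 := ∑ i, LinearMap.proj i with hsumLdef
  have hsumL : ∀ v : Fin m → ZMod 2, sumL v = ∑ i, v i := by
    intro v
    rw [hsumLdef, LinearMap.sum_apply]
    rfl
  set φ : (Fin m → ZMod 2) →ₗ[ZMod 2] ZMod 2 × ZMod 2 :=
    sumL.prod (LinearMap.proj a) with hφdef
  have hφ : ∀ v : Fin m → ZMod 2, φ v = (∑ i, v i, v a) := by
    intro v
    rw [hφdef]
    show (sumL v, v a) = _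
    rw [hsumL]
  have hφsurj : Function.Surjective φ := by
    intro p
    refine ⟨(p.1 + p.2) • eb + p.2 • ea, ?_⟩
    rw [hφ]
    have h1 : ∑ i, ((p.1 + p.2) • eb + p.2 • ea) i = p.1 := by
      have hpt : ∀ i, ((p.1 + p.2) • eb + p.2 • ea) i
          = (p.1 + p.2) * eb i + p.2 * ea i := fun i => rfl
      rw [Finset.sum_congr rfl fun i _ => hpt i, Finset.sum_add_distrib,
        ← Finset.mul_sum, ← Finset.mul_sum, hsum_ea, hsum_eb, mul_one, mul_one,
        add_assoc, hz2, add_zero]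
    have h2 : ((p.1 + p.2) • eb + p.2 • ea) a = p.2 := by
      show (p.1 + p.2) * eb a + p.2 * ea a = p.2
      rw [heb, hea]
      simp [Ne.symm hba]
    rw [h1, h2]
  have hφrange : LinearMap.range φ = ⊤ := LinearMap.range_eq_top.mpr hφsurj
  -- the linear map ψ : (c,d) ↦ c • ones + d • ea
  set ψ : (ZMod 2 × ZMod 2) →ₗ[ZMod 2] (Fin m → ZMod 2) :=
    (LinearMap.fst (ZMod 2) (ZMod 2) (ZMod 2)).smulRight ones
      + (LinearMap.snd (ZMod 2) (ZMod 2) (ZMod 2)).smulRight ea with hψdef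
  have hψ : ∀ p : ZMod 2 × ZMod 2, ψ p = p.1 • ones + p.2 • ea := fun p => rfl
  have hψinj : Function.Injective ψ := by
    apply (injective_iff_map_eq_zero ψ).mpr
    intro p hp
    have hb' : p.1 * ones b + p.2 * ea b = 0 := congrFun (hψ p ▸ hp) b
    have ha' : p.1 * ones a + p.2 * ea a = 0 := congrFun (hψ p ▸ hp) a
    rw [hones, hea] at hb' ha'
    simp [hba] at hb'
    simp [hb'] at ha'
    exact Prod.ext hb' ha'
  have hkerψ : LinearMap.ker (permSubOne m g) = LinearMap.range ψ := by
    apply le_antisymm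
    · intro v hv
      have hv' : ∀ i, v (g⁻¹ i) = v i := by
        intro i
        have h0 := congrFun (LinearMap.mem_ker.mp hv) i
        rw [permSubOne_apply] at h0
        exact sub_eq_zero.mp h0
      have hconst : ∀ i, i ≠ a → v i = v b := by
        intro i hi
        obtain ⟨k, hk⟩ := hg.exists_pow_eq hgb (hsupp i hi)
        rw [← hk, constPow g v hv' k b]
      refine ⟨(v b, v a - v b), ?_⟩
      rw [hψ]
      funext i
      show v b * ones i + (v a - v b) * ea i = v i
      by_cases hia : i = a
      · subst hia
        rw [hones, hea]
        simp
      · rw [hones, hea]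
        simp only [if_neg hia, mul_zero, mul_one, add_zero]
        exact (hconst i hia).symm
    · rintro _ ⟨p, rfl⟩
      rw [LinearMap.mem_ker, hψ, map_add, map_smul, map_smul, hTones, hTea,
        smul_zero, smul_zero, add_zero]
  -- dimension count
  have hrank1 : Module.finrank (ZMod 2) (LinearMap.range (permSubOne m g))
      + Module.finrank (ZMod 2) (LinearMap.ker (permSubOne m g)) = m := by
    rw [LinearMap.finrank_range_add_finrank_ker]
    exact Module.finrank_fin_fun _
  have hprod2 : Module.finrank (ZMod 2) (ZMod 2 × ZMod 2) = 2 := by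
    simp
  have hkerrank : Module.finrank (ZMod 2) (LinearMap.ker (permSubOne m g)) = 2 := by
    rw [hkerψ, LinearMap.finrank_range_of_inj hψinj, hprod2]
  have hφker : Module.finrank (ZMod 2) (LinearMap.ker φ) = m - 2 := by
    have h0 := LinearMap.finrank_range_add_finrank_ker φ
    rw [hφrange, finrank_top, hprod2, Module.finrank_fin_fun] at h0
    omega
  have hrange_le : LinearMap.range (permSubOne m g) ≤ LinearMap.ker φ := by
    rintro _ ⟨w, rfl⟩
    rw [LinearMap.mem_ker, hφ]
    have h1 : ∑ i, permSubOne m g w i = 0 := (hM _).mp (hmapsub g w)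
    have h2 : permSubOne m g w a = 0 := by
      rw [permSubOne_apply, hgainv, sub_self]
    rw [h1, h2]
    rfl
  have hrange_eq : LinearMap.range (permSubOne m g) = LinearMap.ker φ := by
    apply Submodule.eq_of_le_of_finrank_le hrange_le
    rw [hφker]
    omega
  have hmapg : Submodule.map (permSubOne m g) M = LinearMap.ker φ := by
    apply le_antisymm
    · rintro _ ⟨w, _, rfl⟩
      exact hrange_le ⟨w, rfl⟩
    · intro v hv
      rw [← hrange_eq] at hv
      obtain ⟨w, rfl⟩ := hv
      by_cases hwM : w ∈ M
      · exact ⟨w, hwM, rfl⟩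
      · refine ⟨w + ea, (hM _).mpr ?_, by rw [map_add, hTea, add_zero]⟩
        have hw1 : ∑ i, w i = 1 := hz1 _ (fun h0 => hwM ((hM w).mpr h0))
        have hsplit : ∑ i, (w + ea) i = ∑ i, w i + ∑ i, ea i := by
          rw [← Finset.sum_add_distrib]; rfl
        rw [hsplit, hw1, hsum_ea]
        exact zmod2_add_self 1
  have hmem : ∀ v : Fin m → ZMod 2,
      v ∈ Submodule.map (permSubOne m g) M ↔ (∑ i, v i = 0 ∧ v a = 0) := by
    intro v
    rw [hmapg, LinearMap.mem_ker, hφ, Prod.mk_eq_zero]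
  refine ⟨⟨⟨ea + eb, ?_, ?_⟩, ?_⟩, hmaph⟩
  · rw [hM]
    have hsplit : ∑ i, (ea + eb) i = ∑ i, ea i + ∑ i, eb i := by
      rw [← Finset.sum_add_distrib]; rfl
    rw [hsplit, hsum_ea, hsum_eb]
    exact zmod2_add_self 1
  · rw [hmem]
    rintro ⟨-, h2⟩
    have h1 : (ea + eb) a = 1 := by
      show ea a + eb a = 1
      simp [hea, heb, Ne.symm hba]
    rw [h2] at h1
    exact one_ne_zero h1.symm
  · intro v hv w hw hvn hwn
    rw [hmem] at hvn hwn ⊢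
    have hva : v a = 1 := hz1 _ (fun h0 => hvn ⟨(hM v).mp hv, h0⟩)
    have hwa : w a = 1 := hz1 _ (fun h0 => hwn ⟨(hM w).mp hw, h0⟩)
    constructor
    · have hsplit : ∑ i, (v - w) i = ∑ i, v i - ∑ i, w i := by
        rw [← Finset.sum_sub_distrib]; rfl
      rw [hsplit, (hM v).mp hv, (hM w).mp hw, sub_self]
    · show v a - w a = 0
      rw [hva, hwa, sub_self]
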